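/- Let G and H be graphs, with H having at least one edge, and r ≥ 1 an integer. Then the following are equivalent: (i) G →_r H; (ii) for every positive integer t there exists n such that every r-coloring of the edges of G[n] contains a monochromatic canonical copy of H[t]. Moreover, if G ↛_r H, then for every n and every t there exists an r-coloring of the edges of G[n] with no monochromatic canonical copy of H[t]. -/

import Mathlib

/-- The `n`-blowup of a graph: each vertex is replaced by an independent set of `n` vertices,
and each edge by a complete bipartite graph between the corresponding sets. -/
def blowupGraph {V : Type} (G : SimpleGraph V) (n : ℕ) : SimpleGraph (V × Fin n) :=
  SimpleGraph.comap Prod.fst G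

/-- The coloring `C` admits a monochromatic copy of `H` in `G`. -/
def HasMonoCopy {V α : Type} (G : SimpleGraph V) (H : SimpleGraph α) {r : ℕ}
    (C : Sym2 V → Fin r) : Prop :=
  ∃ (f : α → V) (c : Fin r), Function.Injective f ∧
    ∀ a b, H.Adj a b → G.Adj (f a) (f b) ∧ C s(f a, f b) = c

/-- `G →_r H`: every `r`-coloring of the edges of `G` contains a monochromatic copy of `H`. -/
def ArrowsFor {V α : Type} (G : SimpleGraph V) (H : SimpleGraph α) (r : ℕ) : Prop :=
  ∀ C : Sym2 V → Fin r, HasMonoCopy G H C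

/-- The coloring `C` of `G[n]` admits a monochromatic canonical copy of `H[t]`:
an embedding `φ` of `H` into `G`, together with `t` blowup vertices `ψ a` in the part indexed
by `φ a` for each vertex `a` of `H`, all of whose blowup edges receive the same color `c`. -/
def HasMonoCanonicalBlowup {V α : Type} (G : SimpleGraph V) (H : SimpleGraph α)
    (n t r : ℕ) (C : Sym2 (V × Fin n) → Fin r) : Prop :=
  ∃ (φ : α → V) (ψ : α → Fin t → Fin n) (c : Fin r),
    Function.Injective φ ∧ (∀ a, Function.Injective (ψ a)) ∧
    ∀ a b, H.Adj a b → G.Adj (φ a) (φ b) ∧ ∀ i j, C s((φ a, ψ a i), (φ b, ψ b j)) = c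

/-- Every `r`-coloring of the edges of `G[n]` contains a monochromatic canonical copy of `H[t]`.
The blowup Ramsey number `B_r(G → H; t)` is the minimum such `n`. -/
def BlowupArrow {V α : Type} (G : SimpleGraph V) (H : SimpleGraph α) (r n t : ℕ) : Prop :=
  ∀ C : Sym2 (V × Fin n) → Fin r, HasMonoCanonicalBlowup G H n t r C

namespace BlowupAux

/-- Iterated pigeonhole: find `s` left vertices and a large right set such that the color
between each chosen left vertex and all surviving right vertices depends only on the left
vertex. -/
lemma tower {β : Type} [DecidableEq β] {r : ℕ} (hr : 1 ≤ r) (c : β → β → Fin r) :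
    ∀ (s : ℕ) (k : ℕ) (A B : Finset β), s ≤ A.card → k * r ^ s ≤ B.card →
    ∃ (A' B' : Finset β) (g : β → Fin r), A' ⊆ A ∧ B' ⊆ B ∧ A'.card = s ∧ k ≤ B'.card ∧
      ∀ a ∈ A', ∀ b ∈ B', c a b = g a := by
  intro s
  induction s with
  | zero =>
    intro k A B _ hB
    exact ⟨∅, B, fun _ => ⟨0, hr⟩, Finset.empty_subset _, subset_rfl, Finset.card_empty,
      by simpa using hB, by simp⟩
  | succ s ih =>
    intro k A B hA hB
    obtain ⟨a, ha⟩ : A.Nonempty := Finset.card_pos.mp (by omega)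
    have hmaps : ∀ b ∈ B, c a b ∈ (Finset.univ : Finset (Fin r)) := fun _ _ => Finset.mem_univ _
    have hne : (Finset.univ : Finset (Fin r)).Nonempty := ⟨⟨0, hr⟩, Finset.mem_univ _⟩
    have hcard : (Finset.univ : Finset (Fin r)).card * (k * r ^ s) ≤ B.card := by
      have h1 : (Finset.univ : Finset (Fin r)).card = r := by simp
      rw [h1]
      calc r * (k * r ^ s) = k * r ^ (s + 1) := by ring
        _ ≤ B.card := hB
    obtain ⟨c₀, _, hc₀⟩ := Finset.exists_le_card_fiber_of_mul_le_card_of_maps_to hmaps hne hcard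
    have hAe : s ≤ (A.erase a).card := by
      rw [Finset.card_erase_of_mem ha]; omega
    obtain ⟨A', B', g, hA'sub, hB'sub, hA'card, hB'card, hconst⟩ :=
      ih k (A.erase a) (B.filter fun b => c a b = c₀) hAe hc₀
    refine ⟨insert a A', B', Function.update g a c₀, ?_, ?_, ?_, hB'card, ?_⟩
    · exact Finset.insert_subset ha (hA'sub.trans (Finset.erase_subset _ _))
    · exact hB'sub.trans (Finset.filter_subset _ _)
    · have hnm : a ∉ A' := fun h => Finset.notMem_erase a A (hA'sub h)
      rw [Finset.card_insert_of_notMem hnm, hA'card]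
    · intro x hx b hb
      rcases Finset.mem_insert.mp hx with rfl | hxA
      · rw [Function.update_self]
        exact (Finset.mem_filter.mp (hB'sub hb)).2
      · have hxa : x ≠ a := fun h => by
          subst h; exact Finset.notMem_erase x A (hA'sub hxA)
        rw [Function.update_of_ne hxa]
        exact hconst x hxA b hb

/-- An upper bound for the bipartite Ramsey number of `K_{t,t}` with `r` colors. -/
def bipBound (r t : ℕ) : ℕ := max (r * (t - 1) + 1) (t * r ^ (r * (t - 1) + 1))

lemma le_bipBound {r : ℕ} (hr : 1 ≤ r) (t : ℕ) : t ≤ bipBound r t := by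
  have h : t * 1 ≤ t * r ^ (r * (t - 1) + 1) :=
    Nat.mul_le_mul_left t (Nat.one_le_pow _ _ hr)
  exact le_trans (by simpa using h) (le_max_right _ _)

/-- Bipartite Ramsey: any `r`-coloring of a large enough complete bipartite graph contains
a monochromatic `K_{t,t}`. -/
lemma bipartite {β : Type} [DecidableEq β] {r : ℕ} (hr : 1 ≤ r) (t : ℕ) (c : β → β → Fin r)
    (A B : Finset β) (hA : bipBound r t ≤ A.card) (hB : bipBound r t ≤ B.card) :
    ∃ (A' B' : Finset β) (c₀ : Fin r), A' ⊆ A ∧ B' ⊆ B ∧ A'.card = t ∧ B'.card = t ∧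
      ∀ a ∈ A', ∀ b ∈ B', c a b = c₀ := by
  obtain ⟨A', B', g, hA'A, hB'B, hA'card, hB'card, hconst⟩ :=
    tower hr c (r * (t - 1) + 1) t A B (le_trans (le_max_left _ _) hA)
      (le_trans (le_max_right _ _) hB)
  have hmaps : ∀ a ∈ A', g a ∈ (Finset.univ : Finset (Fin r)) := fun _ _ => Finset.mem_univ _
  have hcard : (Finset.univ : Finset (Fin r)).card * (t - 1) < A'.card := by
    have h1 : (Finset.univ : Finset (Fin r)).card = r := by simp
    rw [h1, hA'card]; omega
  obtain ⟨c₀, _, hc₀⟩ := Finset.exists_lt_card_fiber_of_mul_lt_card_of_maps_to hmaps hcard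
  have ht1 : t ≤ (A'.filter fun a => g a = c₀).card := by omega
  obtain ⟨A'', hA''sub, hA''card⟩ := Finset.exists_subset_card_eq ht1
  obtain ⟨B'', hB''sub, hB''card⟩ := Finset.exists_subset_card_eq hB'card
  refine ⟨A'', B'', c₀, (hA''sub.trans (Finset.filter_subset _ _)).trans hA'A,
    hB''sub.trans hB'B, hA''card, hB''card, ?_⟩
  intro a ha b hb
  have hag := Finset.mem_filter.mp (hA''sub ha)
  rw [hconst a hag.1 b (hB''sub hb), hag.2]

/-- Iterated bipartite Ramsey bound, one application per edge. -/
def iterBound (r t : ℕ) : ℕ → ℕ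
  | 0 => t
  | k + 1 => bipBound r (iterBound r t k)

/-- Simultaneous version: given a list of (ordered, non-diagonal) pairs of parts and large
enough sets, we can shrink all the sets so that between any two sets joined by a listed pair
the coloring is constant. -/
lemma multi {V β : Type} [DecidableEq V] [DecidableEq β] {r : ℕ} (hr : 1 ≤ r) (t : ℕ)
    (c : V → β → V → β → Fin r) :
    ∀ (L : List (V × V)), (∀ p ∈ L, p.1 ≠ p.2) →
    ∀ S : V → Finset β, (∀ v, iterBound r t L.length ≤ (S v).card) →
    ∃ S' : V → Finset β, (∀ v, S' v ⊆ S v) ∧ (∀ v, t ≤ (S' v).card) ∧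
      ∀ p ∈ L, ∀ i ∈ S' p.1, ∀ j ∈ S' p.2, ∀ i' ∈ S' p.1, ∀ j' ∈ S' p.2,
        c p.1 i p.2 j = c p.1 i' p.2 j' := by
  intro L
  induction L with
  | nil =>
    intro _ S hS
    exact ⟨S, fun _ => subset_rfl, fun v => hS v, by simp⟩
  | cons p L ih =>
    intro hne S hS
    obtain ⟨u, v⟩ := p
    have huv : u ≠ v := hne (u, v) List.mem_cons_self
    have hS' : ∀ w, bipBound r (iterBound r t L.length) ≤ (S w).card := fun w => by
      simpa [iterBound] using hS w
    obtain ⟨A', B', c₀, hA'sub, hB'sub, hA'card, hB'card, hconst⟩ :=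
      bipartite hr (iterBound r t L.length) (fun i j => c u i v j) (S u) (S v) (hS' u) (hS' v)
    set S₁ : V → Finset β := fun w => if w = u then A' else if w = v then B' else S w with hS₁
    have hS₁u : S₁ u = A' := by simp [hS₁]
    have hS₁v : S₁ v = B' := by simp [hS₁, show v ≠ u from Ne.symm huv]
    have hS₁card : ∀ w, iterBound r t L.length ≤ (S₁ w).card := by
      intro w
      by_cases h1 : w = u
      · subst h1; rw [hS₁u, hA'card]
      by_cases h2 : w = v
      · subst h2; rw [hS₁v, hB'card]
      · simp only [hS₁, if_neg h1, if_neg h2]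
        exact le_trans (le_bipBound hr _) (hS' w)
    have hS₁sub : ∀ w, S₁ w ⊆ S w := by
      intro w
      by_cases h1 : w = u
      · subst h1; rw [hS₁u]; exact hA'sub
      by_cases h2 : w = v
      · subst h2; rw [hS₁v]; exact hB'sub
      · simp only [hS₁, if_neg h1, if_neg h2]
        exact subset_rfl
    obtain ⟨S', hsub, hcard, hmono⟩ :=
      ih (fun q hq => hne q (List.mem_cons_of_mem _ hq)) S₁ hS₁card
    refine ⟨S', fun w => (hsub w).trans (hS₁sub w), hcard, ?_⟩
    intro q hq
    rcases List.mem_cons.mp hq with rfl | hq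
    · intro i hi j hj i' hi' j' hj'
      have hiA : i ∈ A' := hS₁u ▸ hsub u hi
      have hi'A : i' ∈ A' := hS₁u ▸ hsub u hi'
      have hjB : j ∈ B' := hS₁v ▸ hsub v hj
      have hj'B : j' ∈ B' := hS₁v ▸ hsub v hj'
      rw [hconst i hiA j hjB, hconst i' hi'A j' hj'B]
    · exact hmono q hq

end BlowupAux

/-- `G →_r H` holds if and only if for every positive integer `t` there is an
`n` such that every `r`-coloring of `G[n]` contains a monochromatic canonical copy of `H[t]`.
Moreover, if `G ↛_r H`, then for every `n` and every (positive) `t` some `r`-coloring of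
`G[n]` has no monochromatic canonical copy of `H[t]`. -/
theorem blowup_ramsey_finite_iff_arrows
    (α V : Type) [Fintype α] [Fintype V] (H : SimpleGraph α) (hH : ∃ x y, H.Adj x y)
    (G : SimpleGraph V) (r : ℕ) (hr : 1 ≤ r) :
    (ArrowsFor G H r ↔ ∀ t : ℕ, 1 ≤ t → ∃ n : ℕ, BlowupArrow G H r n t) ∧
    (¬ ArrowsFor G H r → ∀ n t : ℕ, 1 ≤ t →
      ∃ C : Sym2 (V × Fin n) → Fin r, ¬ HasMonoCanonicalBlowup G H n t r C) := by
  classical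
  -- the "moreover" part: lift a bad coloring of G to G[n]
  have neg : ¬ ArrowsFor G H r → ∀ n t : ℕ, 1 ≤ t →
      ∃ C : Sym2 (V × Fin n) → Fin r, ¬ HasMonoCanonicalBlowup G H n t r C := by
    intro hna n t ht
    rw [ArrowsFor] at hna
    push_neg at hna
    obtain ⟨C, hC⟩ := hna
    refine ⟨fun s => C (s.map Prod.fst), ?_⟩
    rintro ⟨φ, ψ, c, hφ, hψ, hmono⟩
    refine hC ⟨φ, c, hφ, fun a b hab => ?_⟩
    obtain ⟨hadj, hcol⟩ := hmono a b hab
    refine ⟨hadj, ?_⟩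
    have h0 := hcol ⟨0, ht⟩ ⟨0, ht⟩
    simpa [Sym2.map_pair_eq] using h0
  -- the main (forward) direction
  have fwd : ArrowsFor G H r → ∀ t : ℕ, 1 ≤ t → ∃ n : ℕ, BlowupArrow G H r n t := by
    intro arr t ht
    set L : List (V × V) := (Finset.univ.filter (fun p : V × V => G.Adj p.1 p.2)).toList with hL
    refine ⟨BlowupAux.iterBound r t L.length, ?_⟩
    intro C
    have hLne : ∀ p ∈ L, p.1 ≠ p.2 := by
      intro p hp
      have hm := Finset.mem_filter.mp (Finset.mem_toList.mp hp)
      exact hm.2.ne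
    obtain ⟨S', hsub, hcard, hmono⟩ :=
      BlowupAux.multi (β := Fin (BlowupAux.iterBound r t L.length)) hr t
        (fun u i v j => C s((u, i), (v, j))) L hLne (fun _ => Finset.univ)
        (fun w => by simp)
    have hT : ∀ w : V, ∃ T ⊆ S' w, T.card = t := fun w => Finset.exists_subset_card_eq (hcard w)
    choose T hTsub hTcard using hT
    set ψ' : V → Fin t → Fin (BlowupAux.iterBound r t L.length) :=
      fun w i => ((T w).orderIsoOfFin (hTcard w) i : Fin _) with hψ'
    have hψmem : ∀ w i, ψ' w i ∈ S' w := fun w i =>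
      hTsub w ((T w).orderIsoOfFin (hTcard w) i).2
    have hψinj : ∀ w, Function.Injective (ψ' w) := by
      intro w x y hxy
      exact ((T w).orderIsoOfFin (hTcard w)).injective (Subtype.ext hxy)
    set pick : V → Fin (BlowupAux.iterBound r t L.length) := fun w => ψ' w ⟨0, ht⟩ with hpick
    set D : Sym2 V → Fin r :=
      Sym2.lift ⟨fun u w => C s((u, pick u), (w, pick w)), fun u w => congrArg C Sym2.eq_swap⟩
      with hD
    obtain ⟨f, c₀, hfinj, hf⟩ := arr D
    refine ⟨f, fun a => ψ' (f a), c₀, hfinj, fun a => hψinj (f a), ?_⟩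
    intro a b hab
    obtain ⟨hadj, hcol⟩ := hf a b hab
    refine ⟨hadj, ?_⟩
    intro i j
    have hmemL : (f a, f b) ∈ L := by
      rw [hL, Finset.mem_toList, Finset.mem_filter]
      exact ⟨Finset.mem_univ _, hadj⟩
    have heq := hmono (f a, f b) hmemL (ψ' (f a) i) (hψmem _ _) (ψ' (f b) j) (hψmem _ _)
      (pick (f a)) (hψmem _ _) (pick (f b)) (hψmem _ _)
    have hDval : D s(f a, f b) = C s((f a, pick (f a)), (f b, pick (f b))) :=
      Sym2.lift_mk _ _ _
    rw [heq, ← hDval]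
    exact hcol
  exact ⟨⟨fun h => fwd h, fun h => by
    by_contra hna
    obtain ⟨n, hn⟩ := h 1 le_rfl
    obtain ⟨C, hC⟩ := neg hna n 1 le_rfl
    exact hC (hn C)⟩, neg⟩
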